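/- Let A = (Q, Σ, δ, s, F) be a DFA and let p ≥ 2. Define the pruned power semi-DFA B whose states are the sets T ⊆ Q with |T| = p whose member states have pairwise-intersecting open co-lex intervals, and with transition δ_B(T, a) = {δ(u, a) : u ∈ T} defined when this image is also a state of B. Then B contains a directed cycle if and only if there exist a nonempty string γ and p pairwise distinct states u₁, …, u_p ∈ Q with δ(u_i, γ) = u_i for all i ∈ [p] and pairwise-intersecting open co-lex intervals (inf I_{u_i}, sup I_{u_i}). -/

import Mathlib

/-- Co-lexicographic order on finite strings: lexicographic order on reverses. -/
def ColexList {Sig : Type*} [LinearOrder Sig] (a b : List Sig) : Prop :=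
  List.Lex (· < ·) a.reverse b.reverse

/-- Reflexive co-lexicographic order. -/
def ColexLe {Sig : Type*} [LinearOrder Sig] (a b : List Sig) : Prop :=
  a = b ∨ ColexList a b

/-- A finite or left-infinite string, represented by its sequence of characters read
from the right end (`none` signals that the string is exhausted). -/
def CStr (Sig : Type*) := ℕ → Option Sig

/-- The representation of a finite string as a `CStr`. -/
def toCStr {Sig : Type*} (a : List Sig) : CStr Sig := fun i => a.reverse[i]?

/-- The left-infinite string `γ^ω = ⋯γγγ` (for nonempty `γ`) as a `CStr`. -/
def omegaCStr {Sig : Type*} (γ : List Sig) : CStr Sig :=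
  fun i => γ.reverse[i % γ.length]?

/-- Strict co-lexicographic order on finite or left-infinite strings: reading from the
right, at the first position where the two strings differ, either the first string is
exhausted or its character is smaller. -/
def cstrLt {Sig : Type*} [LinearOrder Sig] (s t : CStr Sig) : Prop :=
  ∃ j, (∀ i, i < j → s i = t i) ∧
    ((s j = none ∧ t j ≠ none) ∨ ∃ a b, s j = some a ∧ t j = some b ∧ a < b)

/-- Non-strict co-lexicographic order on finite or left-infinite strings. -/
def cstrLe {Sig : Type*} [LinearOrder Sig] (s t : CStr Sig) : Prop :=
  s = t ∨ cstrLt s t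

/-- `w` is a co-lexicographic lower bound of the set `A` of finite strings. -/
def IsColexLB {Sig : Type*} [LinearOrder Sig] (w : CStr Sig) (A : Set (List Sig)) : Prop :=
  ∀ a ∈ A, cstrLe w (toCStr a)

/-- `w` is a co-lexicographic upper bound of the set `A` of finite strings. -/
def IsColexUB {Sig : Type*} [LinearOrder Sig] (w : CStr Sig) (A : Set (List Sig)) : Prop :=
  ∀ a ∈ A, cstrLe (toCStr a) w

/-- `w` is the co-lexicographic infimum of the set `A` of finite strings. -/
def IsColexInf {Sig : Type*} [LinearOrder Sig] (w : CStr Sig) (A : Set (List Sig)) : Prop :=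
  IsColexLB w A ∧ ∀ w', IsColexLB w' A → cstrLe w' w

/-- `w` is the co-lexicographic supremum of the set `A` of finite strings. -/
def IsColexSup {Sig : Type*} [LinearOrder Sig] (w : CStr Sig) (A : Set (List Sig)) : Prop :=
  IsColexUB w A ∧ ∀ w', IsColexUB w' A → cstrLe w w'

/-- The extension of a (total) DFA transition function to strings. -/
def deltaStar {Q Sig : Type*} (δ : Q → Sig → Q) (q : Q) (a : List Sig) : Q :=
  a.foldl δ q

/-- `Ireach δ s u` is the set `I_u` of strings leading from the source `s` to `u`. -/
def Ireach {Q Sig : Type*} (δ : Q → Sig → Q) (s u : Q) : Set (List Sig) :=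
  {a | deltaStar δ s a = u}

/-- Membership of a finite string in the open co-lex interval `(lo, hi)`. -/
def inOpenInterval {Sig : Type*} [LinearOrder Sig] (lo hi : CStr Sig) (a : List Sig) : Prop :=
  cstrLt lo (toCStr a) ∧ cstrLt (toCStr a) hi

/-- A set `S` of states is entangled: there is a co-lexicographically monotone sequence
of strings hitting every state of `S` infinitely often. -/
def Entangled {Q Sig : Type*} [LinearOrder Sig] (δ : Q → Sig → Q) (s : Q) (S : Set Q) : Prop :=
  ∃ a : ℕ → List Sig,
    ((∀ t t', t ≤ t' → ColexLe (a t) (a t')) ∨ (∀ t t', t ≤ t' → ColexLe (a t') (a t))) ∧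
    ∀ u ∈ S, ∀ t, ∃ t', t ≤ t' ∧ deltaStar δ s (a t') = u

/-- States of the pruned power semi-DFA `B`: subsets of size `p` whose member states
have pairwise intersecting open co-lex intervals (described by `infS`/`supS`). -/
def StateB {Q Sig : Type*} [LinearOrder Sig] (p : ℕ)
    (infS supS : Q → CStr Sig) (T : Finset Q) : Prop :=
  T.card = p ∧ ∀ u ∈ T, ∀ v ∈ T, ∃ α : List Sig,
    inOpenInterval (infS u) (supS u) α ∧ inOpenInterval (infS v) (supS v) α

/-- The transition function of the power semi-DFA, extended to strings. -/
def imageStar {Q Sig : Type*} [DecidableEq Q] (δ : Q → Sig → Q)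
    (T : Finset Q) (a : List Sig) : Finset Q :=
  a.foldl (fun T c => T.image (fun u => δ u c)) T

set_option linter.unusedSectionVars false

section Lemmas
variable {Sig : Type*} [LinearOrder Sig]

lemma cstrLt_irrefl (w : CStr Sig) : ¬ cstrLt w w := by
  rintro ⟨j, -, ⟨h1, h2⟩ | ⟨a, b, ha, hb, hab⟩⟩
  · exact h2 h1
  · rw [ha] at hb; exact absurd (Option.some.inj hb) (ne_of_lt hab)

lemma cstrLt_asymm {w w' : CStr Sig} (h : cstrLt w w') (h' : cstrLt w' w) : False := by
  obtain ⟨j, hj, hc⟩ := h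
  obtain ⟨j', hj', hc'⟩ := h'
  rcases lt_trichotomy j j' with hlt | rfl | hlt
  · have e := hj' j hlt
    rcases hc with ⟨h1, h2⟩ | ⟨a, b, ha, hb, hab⟩
    · exact h2 (e.trans h1)
    · exact (ne_of_lt hab) (Option.some.inj (ha.symm.trans (e.symm.trans hb)))
  · rcases hc with ⟨h1, h2⟩ | ⟨a, b, ha, hb, hab⟩ <;>
      rcases hc' with ⟨h1', h2'⟩ | ⟨a', b', ha', hb', hab'⟩
    · exact h2' h1
    · exact absurd (h1.symm.trans hb') (by simp)
    · exact absurd (h1'.symm.trans hb) (by simp)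
    · have e1 : a = b' := Option.some.inj (ha.symm.trans hb')
      have e2 : b = a' := Option.some.inj (hb.symm.trans ha')
      have : b < a := by rw [e2, e1]; exact hab'
      exact lt_asymm hab this
  · have e := hj j' hlt
    rcases hc' with ⟨h1, h2⟩ | ⟨a, b, ha, hb, hab⟩
    · exact h2 (e.trans h1)
    · exact (ne_of_lt hab) (Option.some.inj (ha.symm.trans (e.symm.trans hb)))

lemma cstrLt_trans {w1 w2 w3 : CStr Sig} (h : cstrLt w1 w2) (h' : cstrLt w2 w3) :
    cstrLt w1 w3 := by
  obtain ⟨j, hj, hc⟩ := h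
  obtain ⟨j', hj', hc'⟩ := h'
  rcases lt_trichotomy j j' with hlt | rfl | hlt
  · refine ⟨j, fun i hi => (hj i hi).trans (hj' i (hi.trans hlt)), ?_⟩
    have e := hj' j hlt
    rcases hc with ⟨h1, h2⟩ | ⟨a, b, ha, hb, hab⟩
    · exact Or.inl ⟨h1, by rw [← e]; exact h2⟩
    · exact Or.inr ⟨a, b, ha, by rw [← e]; exact hb, hab⟩
  · refine ⟨j, fun i hi => (hj i hi).trans (hj' i hi), ?_⟩
    rcases hc with ⟨h1, h2⟩ | ⟨a, b, ha, hb, hab⟩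
    · rcases hc' with ⟨h1', h2'⟩ | ⟨a', b', ha', hb', hab'⟩
      · exact Or.inl ⟨h1, h2'⟩
      · exact Or.inl ⟨h1, by rw [hb']; simp⟩
    · rcases hc' with ⟨h1', h2'⟩ | ⟨a', b', ha', hb', hab'⟩
      · rw [hb] at h1'; exact absurd h1' (by simp)
      · rw [hb] at ha'
        exact Or.inr ⟨a, b', ha, hb', hab.trans ((Option.some.inj ha') ▸ hab')⟩
  · refine ⟨j', fun i hi => (hj i (hi.trans hlt)).trans (hj' i hi), ?_⟩
    have e := hj j' hlt
    rcases hc' with ⟨h1, h2⟩ | ⟨a, b, ha, hb, hab⟩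
    · exact Or.inl ⟨e.trans h1, h2⟩
    · exact Or.inr ⟨a, b, e.trans ha, hb, hab⟩

lemma cstrLe_trans_lt {w1 w2 w3 : CStr Sig} (h : cstrLe w1 w2) (h' : cstrLt w2 w3) :
    cstrLt w1 w3 := by rcases h with rfl | h; exacts [h', cstrLt_trans h h']

lemma cstrLt_trans_le {w1 w2 w3 : CStr Sig} (h : cstrLt w1 w2) (h' : cstrLe w2 w3) :
    cstrLt w1 w3 := by rcases h' with rfl | h'; exacts [h, cstrLt_trans h h']

lemma cstrLe_trans {w1 w2 w3 : CStr Sig} (h : cstrLe w1 w2) (h' : cstrLe w2 w3) :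
    cstrLe w1 w3 := by rcases h with rfl | h; exacts [h', Or.inr (cstrLt_trans_le h h')]

lemma cstr_total (w w' : CStr Sig) : cstrLt w w' ∨ w = w' ∨ cstrLt w' w := by
  classical
  by_cases h : w = w'
  · exact Or.inr (Or.inl h)
  have hd : ∃ j, w j ≠ w' j := by
    by_contra hc; push_neg at hc; exact h (funext hc)
  set j := Nat.find hd with hjdef
  have hj : w j ≠ w' j := Nat.find_spec hd
  have hmin : ∀ i, i < j → w i = w' i := fun i hi =>
    not_not.mp (Nat.find_min hd hi)
  cases hw : w j with
  | none =>
    cases hw' : w' j with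
    | none => exact absurd (hw.trans hw'.symm) hj
    | some b => exact Or.inl ⟨j, hmin, Or.inl ⟨hw, by rw [hw']; simp⟩⟩
  | some a =>
    cases hw' : w' j with
    | none =>
      exact Or.inr (Or.inr ⟨j, fun i hi => (hmin i hi).symm, Or.inl ⟨hw', by rw [hw]; simp⟩⟩)
    | some b =>
      rcases lt_trichotomy a b with h1 | rfl | h1
      · exact Or.inl ⟨j, hmin, Or.inr ⟨a, b, hw, hw', h1⟩⟩
      · exact absurd (hw.trans hw'.symm) hj
      · exact Or.inr (Or.inr ⟨j, fun i hi => (hmin i hi).symm, Or.inr ⟨b, a, hw', hw, h1⟩⟩)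

lemma cstrLe_of_not_lt {w w' : CStr Sig} (h : ¬ cstrLt w' w) : cstrLe w w' := by
  rcases cstr_total w w' with h1 | h1 | h1
  · exact Or.inr h1
  · exact Or.inl h1
  · exact absurd h1 h

lemma cstrLe_lt_absurd {w w' : CStr Sig} (h : cstrLe w w') (h' : cstrLt w' w) : False := by
  rcases h with rfl | h; exacts [cstrLt_irrefl _ h', cstrLt_asymm h h']

/-- Appending a finite string on the right of a `CStr`. -/
def appendC {Sig : Type*} (w : CStr Sig) (β : List Sig) : CStr Sig :=
  fun i => if i < β.length then β.reverse[i]? else w (i - β.length)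

lemma toCStr_append (α β : List Sig) : toCStr (α ++ β) = appendC (toCStr α) β := by
  funext i
  simp only [toCStr, appendC, List.reverse_append]
  by_cases h : i < β.length
  · rw [if_pos h, List.getElem?_append_left (by simpa using h)]
  · rw [if_neg h, List.getElem?_append_right (by simpa using not_lt.mp h), List.length_reverse]

lemma appendC_lt {w w' : CStr Sig} (β : List Sig) (h : cstrLt w w') :
    cstrLt (appendC w β) (appendC w' β) := by
  obtain ⟨j, hj, hc⟩ := h
  refine ⟨j + β.length, fun i hi => ?_, ?_⟩
  · simp only [appendC]
    by_cases h' : i < β.length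
    · rw [if_pos h', if_pos h']
    · rw [if_neg h', if_neg h', hj _ (by omega)]
  · have hne : ¬ j + β.length < β.length := by omega
    simp only [appendC, if_neg hne, Nat.add_sub_cancel]
    exact hc

lemma appendC_le {w w' : CStr Sig} (β : List Sig) (h : cstrLe w w') :
    cstrLe (appendC w β) (appendC w' β) := by
  rcases h with rfl | h; exacts [Or.inl rfl, Or.inr (appendC_lt β h)]

lemma appendC_strip_eq {y : CStr Sig} {β : List Sig}
    (hy : ∀ i, i < β.length → y i = β.reverse[i]?) :
    appendC (fun i => y (i + β.length)) β = y := by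
  funext i
  simp only [appendC]
  by_cases h : i < β.length
  · rw [if_pos h, hy i h]
  · rw [if_neg h, Nat.sub_add_cancel (not_lt.mp h)]

lemma strip_lt {w y : CStr Sig} {β : List Sig}
    (hy : ∀ i, i < β.length → y i = β.reverse[i]?)
    (h : cstrLt (appendC w β) y) : cstrLt w (fun i => y (i + β.length)) := by
  obtain ⟨j, hj, hc⟩ := h
  have hge : β.length ≤ j := by
    by_contra hlt
    push_neg at hlt
    have e : appendC w β j = y j := by
      simp only [appendC, if_pos hlt]; exact (hy j hlt).symm
    rcases hc with ⟨h1, h2⟩ | ⟨a, b, ha, hb, hab⟩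
    · exact h2 (e.symm.trans h1)
    · exact ne_of_lt hab (Option.some.inj (ha.symm.trans (e.trans hb)))
  refine ⟨j - β.length, fun i hi => ?_, ?_⟩
  · have := hj (i + β.length) (by omega)
    simpa only [appendC, if_neg (show ¬ i + β.length < β.length by omega),
      Nat.add_sub_cancel] using this
  · have e : appendC w β j = w (j - β.length) := by
      simp only [appendC, if_neg (not_lt.mpr hge)]
    rw [e] at hc
    simpa only [Nat.sub_add_cancel hge] using hc

lemma strip_lt' {w y : CStr Sig} {β : List Sig}
    (hy : ∀ i, i < β.length → y i = β.reverse[i]?)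
    (h : cstrLt y (appendC w β)) : cstrLt (fun i => y (i + β.length)) w := by
  obtain ⟨j, hj, hc⟩ := h
  have hge : β.length ≤ j := by
    by_contra hlt
    push_neg at hlt
    have e : appendC w β j = y j := by
      simp only [appendC, if_pos hlt]; exact (hy j hlt).symm
    rcases hc with ⟨h1, h2⟩ | ⟨a, b, ha, hb, hab⟩
    · exact h2 (e.trans h1)
    · rw [e, ha] at hb; exact absurd (Option.some.inj hb) (ne_of_lt hab)
  refine ⟨j - β.length, fun i hi => ?_, ?_⟩
  · have := hj (i + β.length) (by omega)
    simpa only [appendC, if_neg (show ¬ i + β.length < β.length by omega),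
      Nat.add_sub_cancel] using this
  · have e : appendC w β j = w (j - β.length) := by
      simp only [appendC, if_neg (not_lt.mpr hge)]
    rw [e] at hc
    simpa only [Nat.sub_add_cancel hge] using hc

lemma strip_le' {w y : CStr Sig} {β : List Sig}
    (hy : ∀ i, i < β.length → y i = β.reverse[i]?)
    (h : cstrLe y (appendC w β)) : cstrLe (fun i => y (i + β.length)) w := by
  rcases h with e | h
  · left; funext i
    have : appendC w β (i + β.length) = w i := by
      simp only [appendC, if_neg (show ¬ i + β.length < β.length by omega),
        Nat.add_sub_cancel]
    rw [e, this]
  · exact Or.inr (strip_lt' hy h)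

lemma strip_le {w y : CStr Sig} {β : List Sig}
    (hy : ∀ i, i < β.length → y i = β.reverse[i]?)
    (h : cstrLe (appendC w β) y) : cstrLe w (fun i => y (i + β.length)) := by
  rcases h with e | h
  · left; funext i
    have : appendC w β (i + β.length) = w i := by
      simp only [appendC, if_neg (show ¬ i + β.length < β.length by omega),
        Nat.add_sub_cancel]
    rw [← e, this]
  · exact Or.inr (strip_lt hy h)

end Lemmas


section DFA

lemma deltaStar_append {Q Sig : Type*} (δ : Q → Sig → Q) (q : Q) (a b : List Sig) :
    deltaStar δ q (a ++ b) = deltaStar δ (deltaStar δ q a) b :=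
  List.foldl_append ..

lemma imageStar_eq {Q Sig : Type*} [DecidableEq Q] (δ : Q → Sig → Q) (T : Finset Q) (a : List Sig) :
    imageStar δ T a = T.image (fun u => deltaStar δ u a) := by
  induction a generalizing T with
  | nil =>
    show T = T.image id
    rw [Finset.image_id]
  | cons c a ih =>
    show imageStar δ (T.image (fun u => δ u c)) a = _
    rw [ih, Finset.image_image]
    rfl

variable {Q Sig : Type*} [LinearOrder Sig]

lemma inf_push (δ : Q → Sig → Q) (s : Q) (hacc : ∀ u : Q, ∃ a, deltaStar δ s a = u)
    (infS : Q → CStr Sig) (hinf : ∀ u, IsColexInf (infS u) (Ireach δ s u))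
    (u : Q) (β : List Sig) :
    cstrLe (infS (deltaStar δ u β)) (appendC (infS u) β) := by
  set u' := deltaStar δ u β with hu'
  have hmem : ∀ a ∈ Ireach δ s u, a ++ β ∈ Ireach δ s u' := by
    intro a ha
    show deltaStar δ s (a ++ β) = u'
    rw [deltaStar_append, ha]
  have hLB : ∀ a ∈ Ireach δ s u, cstrLe (infS u') (appendC (toCStr a) β) := by
    intro a ha
    have := (hinf u').1 _ (hmem a ha)
    rwa [toCStr_append] at this
  by_contra hcon
  have hlt : cstrLt (appendC (infS u) β) (infS u') := by
    rcases cstr_total (infS u') (appendC (infS u) β) with h1 | h1 | h1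
    · exact absurd (Or.inr h1) hcon
    · exact absurd (Or.inl h1) hcon
    · exact h1
  obtain ⟨j, hj, hc⟩ := hlt
  obtain ⟨a₀, ha₀⟩ := hacc u
  by_cases hjβ : j < β.length
  · -- at position j < |β| the infimum of u' has a character strictly above β's
    have hch : ∃ c, β.reverse[j]? = some c := by
      refine ⟨β.reverse[j]'(by simpa using hjβ), ?_⟩
      exact List.getElem?_eq_getElem (by simpa using hjβ)
    obtain ⟨c, hc0⟩ := hch
    have happ : appendC (infS u) β j = some c := by
      simp only [appendC, if_pos hjβ]; exact hc0
    rcases hc with ⟨h1, h2⟩ | ⟨a, b, ha, hb, hab⟩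
    · rw [happ] at h1; exact absurd h1 (by simp)
    · have hac : a = c := Option.some.inj (ha.symm.trans happ)
      have hlt2 : cstrLt (appendC (toCStr a₀) β) (infS u') := by
        refine ⟨j, fun i hi => ?_, Or.inr ⟨a, b, ?_, hb, hab⟩⟩
        · have hi' : i < β.length := lt_trans hi hjβ
          have e1 : appendC (toCStr a₀) β i = β.reverse[i]? := by
            simp only [appendC, if_pos hi']
          have e2 : appendC (infS u) β i = β.reverse[i]? := by
            simp only [appendC, if_pos hi']
          rw [e1, ← e2]
          exact hj i hi
        · simp only [appendC, if_pos hjβ]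
          rw [hc0, hac]
      exact cstrLe_lt_absurd (hLB a₀ ha₀) hlt2
  · -- the infimum of u' starts with β; strip it
    push_neg at hjβ
    have hy : ∀ i, i < β.length → infS u' i = β.reverse[i]? := by
      intro i hi
      have := (hj i (lt_of_lt_of_le hi hjβ)).symm
      rwa [show appendC (infS u) β i = β.reverse[i]? by
        simp only [appendC, if_pos hi]] at this
    have hw'' : IsColexLB (fun i => infS u' (i + β.length)) (Ireach δ s u) := by
      intro a ha
      exact strip_le' hy (by rw [← toCStr_append]; exact (hinf u').1 _ (hmem a ha))
    have hle : cstrLe (fun i => infS u' (i + β.length)) (infS u) := (hinf u).2 _ hw''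
    have := appendC_le β hle
    rw [appendC_strip_eq hy] at this
    exact cstrLe_lt_absurd this ⟨j, hj, hc⟩

lemma sup_push (δ : Q → Sig → Q) (s : Q) (hacc : ∀ u : Q, ∃ a, deltaStar δ s a = u)
    (supS : Q → CStr Sig) (hsup : ∀ u, IsColexSup (supS u) (Ireach δ s u))
    (u : Q) (β : List Sig) :
    cstrLe (appendC (supS u) β) (supS (deltaStar δ u β)) := by
  set u' := deltaStar δ u β with hu'
  have hmem : ∀ a ∈ Ireach δ s u, a ++ β ∈ Ireach δ s u' := by
    intro a ha
    show deltaStar δ s (a ++ β) = u'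
    rw [deltaStar_append, ha]
  have hUB : ∀ a ∈ Ireach δ s u, cstrLe (appendC (toCStr a) β) (supS u') := by
    intro a ha
    have := (hsup u').1 _ (hmem a ha)
    rwa [toCStr_append] at this
  by_contra hcon
  have hlt : cstrLt (supS u') (appendC (supS u) β) := by
    rcases cstr_total (appendC (supS u) β) (supS u') with h1 | h1 | h1
    · exact absurd (Or.inr h1) hcon
    · exact absurd (Or.inl h1) hcon
    · exact h1
  obtain ⟨j, hj, hc⟩ := hlt
  obtain ⟨a₀, ha₀⟩ := hacc u
  by_cases hjβ : j < β.length
  · have hch : ∃ c, β.reverse[j]? = some c := by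
      refine ⟨β.reverse[j]'(by simpa using hjβ), ?_⟩
      exact List.getElem?_eq_getElem (by simpa using hjβ)
    obtain ⟨c, hc0⟩ := hch
    have happ : appendC (supS u) β j = some c := by
      simp only [appendC, if_pos hjβ]; exact hc0
    have hlt2 : cstrLt (supS u') (appendC (toCStr a₀) β) := by
      refine ⟨j, fun i hi => ?_, ?_⟩
      · have hi' : i < β.length := lt_trans hi hjβ
        have e1 : appendC (toCStr a₀) β i = β.reverse[i]? := by
          simp only [appendC, if_pos hi']
        have e2 : appendC (supS u) β i = β.reverse[i]? := by
          simp only [appendC, if_pos hi']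
        rw [hj i hi, e2, ← e1]
      · have happ2 : appendC (toCStr a₀) β j = some c := by
          simp only [appendC, if_pos hjβ]; exact hc0
        rcases hc with ⟨h1, h2⟩ | ⟨a, b, ha, hb, hab⟩
        · exact Or.inl ⟨h1, by rw [happ2]; simp⟩
        · have hbc : b = c := Option.some.inj (hb.symm.trans happ)
          exact Or.inr ⟨a, c, ha, happ2, hbc ▸ hab⟩
    exact cstrLe_lt_absurd (hUB a₀ ha₀) hlt2
  · push_neg at hjβ
    have hy : ∀ i, i < β.length → supS u' i = β.reverse[i]? := by
      intro i hi
      have := hj i (lt_of_lt_of_le hi hjβ)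
      rwa [show appendC (supS u) β i = β.reverse[i]? by
        simp only [appendC, if_pos hi]] at this
    have hw'' : IsColexUB (fun i => supS u' (i + β.length)) (Ireach δ s u) := by
      intro a ha
      exact strip_le hy (by rw [← toCStr_append]; exact (hsup u').1 _ (hmem a ha))
    have hle : cstrLe (supS u) (fun i => supS u' (i + β.length)) := (hsup u).2 _ hw''
    have := appendC_le β hle
    rw [appendC_strip_eq hy] at this
    exact cstrLe_lt_absurd this ⟨j, hj, hc⟩

lemma interval_push (δ : Q → Sig → Q) (s : Q) (hacc : ∀ u : Q, ∃ a, deltaStar δ s a = u)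
    (infS supS : Q → CStr Sig)
    (hinf : ∀ u, IsColexInf (infS u) (Ireach δ s u))
    (hsup : ∀ u, IsColexSup (supS u) (Ireach δ s u))
    (u : Q) (β α : List Sig) (h : inOpenInterval (infS u) (supS u) α) :
    inOpenInterval (infS (deltaStar δ u β)) (supS (deltaStar δ u β)) (α ++ β) := by
  obtain ⟨h1, h2⟩ := h
  constructor
  · rw [toCStr_append]
    exact cstrLe_trans_lt (inf_push δ s hacc infS hinf u β) (appendC_lt β h1)
  · rw [toCStr_append]
    exact cstrLt_trans_le (appendC_lt β h2) (sup_push δ s hacc supS hsup u β)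

end DFA


lemma deltaStar_join_replicate {Q Sig : Type*} (δ : Q → Sig → Q) (γ : List Sig) :
    ∀ (k : ℕ) (q : Q),
      deltaStar δ q ((List.replicate k γ).flatten) = (fun x => deltaStar δ x γ)^[k] q := by
  intro k
  induction k with
  | zero => intro q; rfl
  | succ k ih =>
    intro q
    rw [List.replicate_succ]
    show deltaStar δ q (γ ++ (List.replicate k γ).flatten) = _
    rw [deltaStar_append, ih, Function.iterate_succ_apply]


/-- The pruned power semi-DFA `B` contains a directed cycle (passing only through
states of `B`) if and only if there are a nonempty string `γ` and `p` pairwise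
distinct states `u_1, …, u_p` with `δ(u_i, γ) = u_i` whose open co-lex intervals
pairwise intersect. -/
theorem stmt_16 {Q Sig : Type*} [Fintype Q] [DecidableEq Q] [LinearOrder Sig]
    (δ : Q → Sig → Q) (s : Q) (p : ℕ) (hp : 2 ≤ p)
    (hacc : ∀ u : Q, ∃ a, deltaStar δ s a = u)
    (infS supS : Q → CStr Sig)
    (hinf : ∀ u, IsColexInf (infS u) (Ireach δ s u))
    (hsup : ∀ u, IsColexSup (supS u) (Ireach δ s u)) :
    (∃ (γ : List Sig) (T : Finset Q), γ ≠ [] ∧ StateB p infS supS T ∧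
       (∀ j ≤ γ.length, StateB p infS supS (imageStar δ T (γ.take j))) ∧
       imageStar δ T γ = T)
    ↔
    (∃ (γ : List Sig) (u : Fin p → Q), γ ≠ [] ∧ Function.Injective u ∧
       (∀ i, deltaStar δ (u i) γ = u i) ∧
       ∀ i j, ∃ α : List Sig,
         inOpenInterval (infS (u i)) (supS (u i)) α ∧
         inOpenInterval (infS (u j)) (supS (u j)) α) := by
  constructor
  · rintro ⟨γ, T, hγ, hT, -, hcyc⟩
    set F : Q → Q := fun x => deltaStar δ x γ with hF
    have himg : T.image F = T := by rw [← imageStar_eq]; exact hcyc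
    have hinj : Set.InjOn F T := Finset.injOn_of_card_image_eq (by rw [himg])
    have hmemF : ∀ x ∈ T, F x ∈ T := fun x hx => himg ▸ Finset.mem_image_of_mem F hx
    let g : {x // x ∈ T} → {x // x ∈ T} := fun x => ⟨F x.1, hmemF x.1 x.2⟩
    have hginj : Function.Injective g := by
      intro x y hxy
      exact Subtype.ext (hinj x.2 y.2 (congrArg Subtype.val hxy))
    have hgbij : Function.Bijective g := Finite.injective_iff_bijective.mp hginj
    let σ : Equiv.Perm {x // x ∈ T} := Equiv.ofBijective g hgbij
    have hσ : ∀ (n : ℕ) (x : {x // x ∈ T}), ((σ ^ n) x : Q) = F^[n] x.1 := by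
      intro n
      induction n with
      | zero => intro x; rfl
      | succ n ih =>
        intro x
        rw [pow_succ', Equiv.Perm.mul_apply, Function.iterate_succ_apply']
        rw [show ((σ ((σ ^ n) x) : {x // x ∈ T}) : Q) = F ((σ ^ n) x : Q) from rfl, ih x]
    set k := orderOf σ with hk
    have hkpos : 0 < k := orderOf_pos σ
    have hσk : σ ^ k = 1 := pow_orderOf_eq_one σ
    set γ' := (List.replicate k γ).flatten with hγ'def
    have hγ' : γ' ≠ [] := by
      obtain ⟨k', hk'⟩ := Nat.exists_eq_succ_of_ne_zero hkpos.ne'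
      intro h
      rw [hγ'def, hk', List.replicate_succ] at h
      have h2 : γ ++ (List.replicate k' γ).flatten = [] := h
      exact hγ (List.append_eq_nil_iff.mp h2).1
    have hfix : ∀ x ∈ T, deltaStar δ x γ' = x := by
      intro x hx
      rw [hγ'def, deltaStar_join_replicate]
      have := hσ k ⟨x, hx⟩
      rw [hσk] at this
      exact this.symm
    obtain ⟨hcard, hpair⟩ := hT
    let e := T.equivFinOfCardEq hcard
    refine ⟨γ', fun i => (e.symm i : Q), hγ', ?_, ?_, ?_⟩
    · intro i j hij
      exact e.symm.injective (Subtype.coe_injective hij)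
    · intro i; exact hfix _ (e.symm i).2
    · intro i j; exact hpair _ (e.symm i).2 _ (e.symm j).2
  · rintro ⟨γ, u, hγ, hu, hfix, hint⟩
    set T : Finset Q := Finset.univ.image u with hTdef
    have hmemT : ∀ x, x ∈ T ↔ ∃ i, u i = x := by
      intro x; simp [hTdef]
    have hcard : T.card = p := by
      rw [hTdef, Finset.card_image_of_injective _ hu, Finset.card_univ, Fintype.card_fin]
    have himg : T.image (fun x => deltaStar δ x γ) = T := by
      rw [hTdef, Finset.image_image]
      congr 1
      funext i
      exact hfix i
    have hcyc : imageStar δ T γ = T := by rw [imageStar_eq]; exact himg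
    clear_value T
    have hstate : ∀ j, StateB p infS supS (imageStar δ T (γ.take j)) := by
      intro j
      set β := γ.take j with hβ
      rw [imageStar_eq]
      constructor
      · -- cardinality
        have hsplit : T.image (fun x => deltaStar δ x γ)
            = (T.image (fun x => deltaStar δ x β)).image
              (fun x => deltaStar δ x (γ.drop j)) := by
          rw [Finset.image_image]
          congr 1
          funext x
          show deltaStar δ x γ = deltaStar δ (deltaStar δ x β) (γ.drop j)
          rw [← deltaStar_append, hβ, List.take_append_drop]
        have h1 : p ≤ (T.image (fun x => deltaStar δ x β)).card := by
          calc p = T.card := hcard.symm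
            _ = ((T.image (fun x => deltaStar δ x β)).image
                  (fun x => deltaStar δ x (γ.drop j))).card := by rw [← hsplit, himg]
            _ ≤ (T.image (fun x => deltaStar δ x β)).card := Finset.card_image_le
        have h2 : (T.image (fun x => deltaStar δ x β)).card ≤ p :=
          le_trans Finset.card_image_le (le_of_eq hcard)
        exact le_antisymm h2 h1
      · -- pairwise intervals
        intro v hv w hw
        obtain ⟨x, hx, rfl⟩ := Finset.mem_image.mp hv
        obtain ⟨y, hy, rfl⟩ := Finset.mem_image.mp hw
        obtain ⟨i, rfl⟩ := (hmemT x).mp hx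
        obtain ⟨i', rfl⟩ := (hmemT y).mp hy
        obtain ⟨α, hα1, hα2⟩ := hint i i'
        exact ⟨α ++ β, interval_push δ s hacc infS supS hinf hsup _ β α hα1,
          interval_push δ s hacc infS supS hinf hsup _ β α hα2⟩
    refine ⟨γ, T, hγ, ?_, fun j _ => hstate j, hcyc⟩
    have := hstate 0
    simpa [imageStar] using this
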